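/- Let p be an odd prime and U an F_p-vector space of dimension 6 with basis u₁,…,u₆. The trivector ω = u₁∧u₂∧u₃ + u₃∧u₄∧u₅ + u₅∧u₆∧u₁ ∈ Λ³U is not decomposable into a sum of trivectors of the form x ∧ β (x ∈ U, β ∈ Λ²U) lying in the span of ω and u₁∧u₃∧u₅; more precisely, the subgroup of ⟨ω, u₁∧u₃∧u₅⟩ generated by its elements of the form x∧β with x ∈ U, β ∈ Λ²U is exactly ⟨u₁∧u₃∧u₅⟩. -/

import Mathlib

open ExteriorAlgebra

section aux
variable {R : Type*} [CommRing R]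

lemma det_fin_four' (A : Matrix (Fin 4) (Fin 4) R) : A.det =
    A 0 0 * (A 1 1 * (A 2 2 * A 3 3 - A 2 3 * A 3 2) - A 1 2 * (A 2 1 * A 3 3 - A 2 3 * A 3 1)
      + A 1 3 * (A 2 1 * A 3 2 - A 2 2 * A 3 1))
  - A 0 1 * (A 1 0 * (A 2 2 * A 3 3 - A 2 3 * A 3 2) - A 1 2 * (A 2 0 * A 3 3 - A 2 3 * A 3 0)
      + A 1 3 * (A 2 0 * A 3 2 - A 2 2 * A 3 0))
  + A 0 2 * (A 1 0 * (A 2 1 * A 3 3 - A 2 3 * A 3 1) - A 1 1 * (A 2 0 * A 3 3 - A 2 3 * A 3 0)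
      + A 1 3 * (A 2 0 * A 3 1 - A 2 1 * A 3 0))
  - A 0 3 * (A 1 0 * (A 2 1 * A 3 2 - A 2 2 * A 3 1) - A 1 1 * (A 2 0 * A 3 2 - A 2 2 * A 3 0)
      + A 1 2 * (A 2 0 * A 3 1 - A 2 1 * A 3 0)) := by
  rw [Matrix.det_succ_row_zero]
  simp [Fin.sum_univ_succ, Matrix.det_fin_three, Fin.succ_ne_zero, Matrix.submatrix_apply]
  simp only [show (Fin.succ 2 : Fin 4) = 3 from rfl,
    show ((2 : Fin 4).succAbove (2 : Fin 3)) = 3 by decide,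
    show ((1 : Fin 4).succAbove (2 : Fin 3)) = 3 by decide,
    show (Fin.castSucc 2 : Fin 4) = 2 from rfl,
    show ((3 : Fin 4).succAbove (2 : Fin 3)) = 2 by decide]
  ring

lemma ι_mul_ιMulti {M : Type*} [AddCommGroup M] [Module R M] {n : ℕ} (x : M) (v : Fin n → M) :
    ι R x * ιMulti R n v = ιMulti R (n+1) (Matrix.vecCons x v) := by
  rw [ιMulti_succ_apply]
  simp [Matrix.vecTail, Fin.cons_zero]
  congr 1

noncomputable def L4 (R : Type*) [CommRing R] (s : Fin 4 → Fin 6) :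
    ExteriorAlgebra R (Fin 6 → R) →ₗ[R] R :=
  liftAlternating (Function.update (0 : ∀ i, (Fin 6 → R) [⋀^Fin i]→ₗ[R] R) 4
    (Matrix.detRowAlternating.compLinearMap (LinearMap.funLeft R R s)))

lemma L4_eval (s : Fin 4 → Fin 6) (y : Fin 6 → R) (v : Fin 3 → (Fin 6 → R)) :
    L4 R s (ι R y * ιMulti R 3 v)
      = Matrix.det (Matrix.of fun i j => (Matrix.vecCons y v : Fin 4 → Fin 6 → R) i (s j)) := by
  rw [ι_mul_ιMulti, L4, liftAlternating_apply_ιMulti, Function.update_self]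
  rfl

noncomputable def L3 (R : Type*) [CommRing R] (s : Fin 3 → Fin 6) :
    ExteriorAlgebra R (Fin 6 → R) →ₗ[R] R :=
  liftAlternating (Function.update (0 : ∀ i, (Fin 6 → R) [⋀^Fin i]→ₗ[R] R) 3
    (Matrix.detRowAlternating.compLinearMap (LinearMap.funLeft R R s)))

lemma L3_eval (s : Fin 3 → Fin 6) (v : Fin 3 → (Fin 6 → R)) :
    L3 R s (ιMulti R 3 v) = Matrix.det (Matrix.of fun i j => v i (s j)) := by
  rw [L3, liftAlternating_apply_ιMulti, Function.update_self]
  rfl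

variable {α : Type*}
lemma vc4_0 (a : α) (v : Fin 3 → α) : Matrix.vecCons a v 0 = a := rfl
lemma vc4_1 (a : α) (v : Fin 3 → α) : Matrix.vecCons a v 1 = v 0 := rfl
lemma vc4_2 (a : α) (v : Fin 3 → α) : Matrix.vecCons a v 2 = v 1 := rfl
lemma vc4_3 (a : α) (v : Fin 3 → α) : Matrix.vecCons a v 3 = v 2 := rfl
lemma vl3_0 (a b c : α) : (![a,b,c] : Fin 3 → α) 0 = a := rfl
lemma vl3_1 (a b c : α) : (![a,b,c] : Fin 3 → α) 1 = b := rfl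
lemma vl3_2 (a b c : α) : (![a,b,c] : Fin 3 → α) 2 = c := rfl
lemma vl4_0 (a b c d : α) : (![a,b,c,d] : Fin 4 → α) 0 = a := rfl
lemma vl4_1 (a b c d : α) : (![a,b,c,d] : Fin 4 → α) 1 = b := rfl
lemma vl4_2 (a b c d : α) : (![a,b,c,d] : Fin 4 → α) 2 = c := rfl
lemma vl4_3 (a b c d : α) : (![a,b,c,d] : Fin 4 → α) 3 = d := rfl

end aux

set_option maxHeartbeats 1000000
set_option synthInstance.maxHeartbeats 400000

theorem stmt14 (p : ℕ) [Fact p.Prime] (hodd : Odd p) :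
    ∀ a b : ZMod p,
      (∃ (x : Fin 6 → ZMod p) (β : ExteriorAlgebra (ZMod p) (Fin 6 → ZMod p)),
          β ∈ ⋀[ZMod p]^2 (Fin 6 → ZMod p) ∧
          a • (ιMulti (ZMod p) 3 ![Pi.single 0 1, Pi.single 1 1, Pi.single 2 1]
              + ιMulti (ZMod p) 3 ![Pi.single 2 1, Pi.single 3 1, Pi.single 4 1]
              + ιMulti (ZMod p) 3 ![Pi.single 4 1, Pi.single 5 1, Pi.single 0 1])
            + b • ιMulti (ZMod p) 3 ![Pi.single 0 1, Pi.single 2 1, Pi.single 4 1]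
            = ι (ZMod p) x * β)
        ↔ a = 0 := by
  intro a b
  constructor
  · rintro ⟨x, β, hβ, h⟩
    by_contra ha
    have h2 : ι (ZMod p) x *
        (a • (ιMulti (ZMod p) 3 ![Pi.single 0 1, Pi.single 1 1, Pi.single 2 1]
              + ιMulti (ZMod p) 3 ![Pi.single 2 1, Pi.single 3 1, Pi.single 4 1]
              + ιMulti (ZMod p) 3 ![Pi.single 4 1, Pi.single 5 1, Pi.single 0 1])
            + b • ιMulti (ZMod p) 3 ![Pi.single 0 1, Pi.single 2 1, Pi.single 4 1]) = 0 := by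
      rw [h, ← mul_assoc, ι_sq_zero, zero_mul]
    have hx3 : x 3 = 0 := by
      have h3 := congrArg (L4 (ZMod p) ![0,1,2,3]) h2
      simp only [mul_add, mul_smul_comm, map_add, map_smul, map_zero, L4_eval] at h3
      simp only [det_fin_four', Matrix.of_apply, vc4_0, vc4_1, vc4_2, vc4_3,
        vl3_0, vl3_1, vl3_2, vl4_0, vl4_1, vl4_2, vl4_3] at h3
      simp only [Pi.single_apply] at h3
      simp at h3
      exact h3.resolve_left ha
    have hx1 : x 1 = 0 := by
      have h3 := congrArg (L4 (ZMod p) ![1,2,3,4]) h2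
      simp only [mul_add, mul_smul_comm, map_add, map_smul, map_zero, L4_eval] at h3
      simp only [det_fin_four', Matrix.of_apply, vc4_0, vc4_1, vc4_2, vc4_3,
        vl3_0, vl3_1, vl3_2, vl4_0, vl4_1, vl4_2, vl4_3] at h3
      simp only [Pi.single_apply] at h3
      simp at h3
      exact h3.resolve_left ha
    have hx5 : x 5 = 0 := by
      have h3 := congrArg (L4 (ZMod p) ![0,1,2,5]) h2
      simp only [mul_add, mul_smul_comm, map_add, map_smul, map_zero, L4_eval] at h3
      simp only [det_fin_four', Matrix.of_apply, vc4_0, vc4_1, vc4_2, vc4_3,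
        vl3_0, vl3_1, vl3_2, vl4_0, vl4_1, vl4_2, vl4_3] at h3
      simp only [Pi.single_apply] at h3
      simp at h3
      exact h3.resolve_left ha
    have hx4 : x 4 = 0 := by
      have h3 := congrArg (L4 (ZMod p) ![0,1,2,4]) h2
      simp only [mul_add, mul_smul_comm, map_add, map_smul, map_zero, L4_eval] at h3
      simp only [det_fin_four', Matrix.of_apply, vc4_0, vc4_1, vc4_2, vc4_3,
        vl3_0, vl3_1, vl3_2, vl4_0, vl4_1, vl4_2, vl4_3] at h3
      simp only [Pi.single_apply] at h3
      simp at h3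
      have h4 : a * x 4 = 0 := by linear_combination -h3 - b * hx1
      exact ((mul_eq_zero.mp h4).resolve_left ha)
    have hx0 : x 0 = 0 := by
      have h3 := congrArg (L4 (ZMod p) ![0,2,3,4]) h2
      simp only [mul_add, mul_smul_comm, map_add, map_smul, map_zero, L4_eval] at h3
      simp only [det_fin_four', Matrix.of_apply, vc4_0, vc4_1, vc4_2, vc4_3,
        vl3_0, vl3_1, vl3_2, vl4_0, vl4_1, vl4_2, vl4_3] at h3
      simp only [Pi.single_apply] at h3
      simp at h3
      have h4 : a * x 0 = 0 := by linear_combination h3 - b * hx3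
      exact ((mul_eq_zero.mp h4).resolve_left ha)
    have hx2 : x 2 = 0 := by
      have h3 := congrArg (L4 (ZMod p) ![0,2,4,5]) h2
      simp only [mul_add, mul_smul_comm, map_add, map_smul, map_zero, L4_eval] at h3
      simp only [det_fin_four', Matrix.of_apply, vc4_0, vc4_1, vc4_2, vc4_3,
        vl3_0, vl3_1, vl3_2, vl4_0, vl4_1, vl4_2, vl4_3] at h3
      simp only [Pi.single_apply] at h3
      simp at h3
      have h4 : a * x 2 = 0 := by linear_combination -h3 - b * hx5
      exact ((mul_eq_zero.mp h4).resolve_left ha)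
    have hx : x = 0 := by
      funext i
      fin_cases i <;> assumption
    rw [hx, map_zero, zero_mul] at h
    have h4 := congrArg (L3 (ZMod p) ![0,1,2]) h
    simp only [map_add, map_smul, map_zero, L3_eval] at h4
    simp only [Matrix.det_fin_three, Matrix.of_apply, vl3_0, vl3_1, vl3_2] at h4
    simp only [Pi.single_apply] at h4
    simp at h4
    exact ha h4
  · rintro rfl
    refine ⟨Pi.single 0 1, b • ιMulti (ZMod p) 2 ![Pi.single 2 1, Pi.single 4 1],
      Submodule.smul_mem _ b (ιMulti_range (ZMod p) 2 (Set.mem_range_self _)), ?_⟩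
    rw [zero_smul, zero_add, mul_smul_comm, ι_mul_ιMulti]
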